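/- Let D be a noncommutative division ring and M an abelian maximal subgroup of D^*. Then the centralizer in D of the set M, i.e., {x ∈ D | ∀ m ∈ M, x*m = m*x}, together with 0, forms a commutative subring of D whose nonzero elements form exactly the group M. In particular, M ∪ {0} is a maximal subfield of D: it is a commutative sub-division-ring, and any subfield L of D with M ∪ {0} ⊆ L satisfies L = M ∪ {0} or L = D. -/

import Mathlib

/-- For an abelian maximal subgroup `M` of `Dˣ` (`D` a noncommutative
division ring), the centralizer of `M` in `D` is commutative, its nonzero elements are
exactly `M`, and `M ∪ {0}` is a maximal subfield of `D`. -/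
theorem stmt_1 {D : Type*} [DivisionRing D]
    (hD : ∃ a b : D, a * b ≠ b * a)
    (M : Subgroup Dˣ) (hmax : IsCoatom M)
    (habel : ∀ a ∈ M, ∀ b ∈ M, a * b = b * a) :
    (∀ a ∈ Subring.centralizer {d : D | ∃ u ∈ M, (u : D) = d},
      ∀ b ∈ Subring.centralizer {d : D | ∃ u ∈ M, (u : D) = d}, a * b = b * a) ∧
    (∀ d : D, (d ∈ Subring.centralizer {d : D | ∃ u ∈ M, (u : D) = d} ∧ d ≠ 0) ↔
      ∃ u ∈ M, (u : D) = d) ∧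
    (∃ K : Subfield D, (∀ a ∈ K, ∀ b ∈ K, a * b = b * a) ∧
      (K : Set D) = {d : D | ∃ u ∈ M, (u : D) = d} ∪ {0} ∧
      ∀ L : Subfield D, (∀ a ∈ L, ∀ b ∈ L, a * b = b * a) → (K : Set D) ⊆ L →
        (L : Set D) = (K : Set D) ∨ (L : Set D) = Set.univ) := by
  -- noncommutativity in units
  obtain ⟨a, b, hab⟩ := hD
  have ha0 : a ≠ 0 := by rintro rfl; simp at hab
  have hb0 : b ≠ 0 := by rintro rfl; simp at hab
  set ua := Units.mk0 a ha0
  set ub := Units.mk0 b hb0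
  have huab : ua * ub ≠ ub * ua := by
    intro h
    apply hab
    have := congrArg (Units.val) h
    simpa [ua, ub] using this
  -- step 1: the centralizer subgroup of M equals M
  have hMle : M ≤ Subgroup.centralizer (M : Set Dˣ) := by
    intro m hm
    rw [Subgroup.mem_centralizer_iff]
    intro h hh
    exact habel h hh m hm
  have hMc : Subgroup.centralizer (M : Set Dˣ) = M := by
    by_contra hne
    have hlt : M < Subgroup.centralizer (M : Set Dˣ) := lt_of_le_of_ne hMle (Ne.symm hne)
    have htop : Subgroup.centralizer (M : Set Dˣ) = ⊤ := hmax.2 _ hlt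
    -- then M ≤ center
    have hMcen : M ≤ Subgroup.center Dˣ := by
      intro m hm
      rw [Subgroup.mem_center_iff]
      intro g
      have hg : g ∈ Subgroup.centralizer (M : Set Dˣ) := htop ▸ Subgroup.mem_top g
      exact (Subgroup.mem_centralizer_iff.mp hg m hm).symm
    have hcenne : Subgroup.center Dˣ ≠ ⊤ := by
      intro h
      have := Subgroup.mem_center_iff.mp (h ▸ Subgroup.mem_top ua) ub
      exact huab this.symm
    have hMeq : M = Subgroup.center Dˣ := by
      rcases lt_or_eq_of_le hMcen with h | h
      · exact absurd (hmax.2 _ h) hcenne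
      · exact h
    have hnorm : M.Normal := by
      refine ⟨fun n hn g => ?_⟩
      have h := Subgroup.mem_center_iff.mp (hMcen hn) g
      rw [h, mul_assoc, mul_inv_cancel, mul_one]
      exact hn
    -- quotient is cyclic
    obtain ⟨g, hg⟩ : ∃ g : Dˣ, g ∉ M := by
      by_contra h
      push_neg at h
      exact hmax.1 (Subgroup.eq_top_iff' M |>.2 h)
    have hsurj : Function.Surjective (QuotientGroup.mk' M) := QuotientGroup.mk'_surjective M
    have hcyc : IsCyclic (Dˣ ⧸ M) := by
      refine ⟨⟨QuotientGroup.mk' M g, ?_⟩⟩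
      intro x
      have hcom : M < Subgroup.comap (QuotientGroup.mk' M) (Subgroup.zpowers ((QuotientGroup.mk' M) g)) := by
        refine lt_of_le_of_ne ?_ ?_
        · intro m hm
          simp only [Subgroup.mem_comap]
          have : (QuotientGroup.mk' M) m = 1 := by
            rw [← MonoidHom.mem_ker, QuotientGroup.ker_mk']; exact hm
          rw [this]; exact Subgroup.one_mem _
        · intro h
          apply hg
          have : g ∈ Subgroup.comap (QuotientGroup.mk' M) (Subgroup.zpowers ((QuotientGroup.mk' M) g)) := by
            simp only [Subgroup.mem_comap]
            exact Subgroup.mem_zpowers _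
          rw [← h] at this
          exact this
      have := hmax.2 _ hcom
      have htop2 : Subgroup.zpowers ((QuotientGroup.mk' M) g) = ⊤ := by
        apply Subgroup.comap_injective hsurj
        rw [this, Subgroup.comap_top]
      have : x ∈ Subgroup.zpowers ((QuotientGroup.mk' M) g) := htop2 ▸ Subgroup.mem_top x
      exact this
    have hker : (QuotientGroup.mk' M).ker ≤ Subgroup.center Dˣ := by
      rw [QuotientGroup.ker_mk']; exact hMcen
    exact huab (commutative_of_cyclic_center_quotient (QuotientGroup.mk' M) hker ua ub)
  -- characterization of the subring centralizer
  set S : Set D := {d : D | ∃ u ∈ M, (u : D) = d} with hS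
  have hmemC : ∀ d : D, (d ∈ Subring.centralizer S ∧ d ≠ 0) ↔ ∃ u ∈ M, (u : D) = d := by
    intro d
    constructor
    · rintro ⟨hd, hd0⟩
      refine ⟨Units.mk0 d hd0, ?_, rfl⟩
      rw [← hMc, Subgroup.mem_centralizer_iff]
      intro m hm
      apply Units.ext
      exact Subring.mem_centralizer_iff.mp hd (m : D) ⟨m, hm, rfl⟩
    · rintro ⟨u, hu, rfl⟩
      refine ⟨?_, u.ne_zero⟩
      rw [Subring.mem_centralizer_iff]
      rintro g ⟨v, hv, rfl⟩
      exact_mod_cast congrArg Units.val (habel v hv u hu)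
  have hcomm : ∀ a ∈ Subring.centralizer S, ∀ b ∈ Subring.centralizer S, a * b = b * a := by
    intro x hx y hy
    rcases eq_or_ne x 0 with rfl | hx0
    · simp
    rcases eq_or_ne y 0 with rfl | hy0
    · simp
    obtain ⟨u, hu, rfl⟩ := (hmemC x).1 ⟨hx, hx0⟩
    obtain ⟨v, hv, rfl⟩ := (hmemC y).1 ⟨hy, hy0⟩
    exact_mod_cast congrArg Units.val (habel u hu v hv)
  refine ⟨hcomm, hmemC, ?_⟩
  -- build the subfield
  refine ⟨{ Subring.centralizer S with
      inv_mem' := ?_ }, ?_, ?_, ?_⟩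
  · intro x hx
    rcases eq_or_ne x 0 with rfl | hx0
    · simpa using hx
    obtain ⟨u, hu, rfl⟩ := (hmemC x).1 ⟨hx, hx0⟩
    have : ((u⁻¹ : Dˣ) : D) ∈ Subring.centralizer S :=
      ((hmemC _).2 ⟨u⁻¹, inv_mem hu, rfl⟩).1
    have h2 : ((u : D))⁻¹ ∈ Subring.centralizer S := by simpa using this
    exact h2
  · exact hcomm
  · ext d
    simp only [Set.mem_union, Set.mem_singleton_iff, SetLike.mem_coe]
    constructor
    · intro hd
      rcases eq_or_ne d 0 with rfl | hd0
      · exact Or.inr rfl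
      · exact Or.inl ((hmemC d).1 ⟨hd, hd0⟩)
    · rintro (hd | rfl)
      · exact ((hmemC d).2 hd).1
      · exact Subring.zero_mem _
  · intro L _ hKL
    -- the subgroup of units lying in L
    set N : Subgroup Dˣ := {
      carrier := {u : Dˣ | (u : D) ∈ L},
      mul_mem' := fun hu hv => by simpa using mul_mem hu hv,
      one_mem' := by simpa using one_mem L,
      inv_mem' := fun {u} hu => by
        simp only [Set.mem_setOf_eq] at hu ⊢
        have := inv_mem (s := L) hu
        simpa using this } with hN
    have hMN : M ≤ N := by
      intro m hm
      have : (m : D) ∈ (↑(Subring.centralizer S) : Set D) := ((hmemC _).2 ⟨m, hm, rfl⟩).1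
      exact hKL this
    rcases eq_or_ne N ⊤ with htop | hne
    · right
      rw [Set.eq_univ_iff_forall]
      intro d
      rcases eq_or_ne d 0 with rfl | hd0
      · exact zero_mem L
      · have : Units.mk0 d hd0 ∈ N := htop ▸ Subgroup.mem_top _
        exact this
    · left
      have hNM : N = M := by
        rcases lt_or_eq_of_le hMN with h | h
        · exact absurd (hmax.2 _ h) hne
        · exact h.symm
      apply Set.Subset.antisymm _ hKL
      intro d hd
      rcases eq_or_ne d 0 with rfl | hd0
      · exact Subring.zero_mem _
      · have hdN : Units.mk0 d hd0 ∈ N := hd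
        rw [hNM] at hdN
        exact ((hmemC d).2 ⟨Units.mk0 d hd0, hdN, rfl⟩).1
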